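/- Let (X₁, μ₁) and (X₂, μ₂) be σ-finite measure spaces and let μ = μ₁ × μ₂ be the product measure on X₁ × X₂. Then for all 1 ≤ p < ∞ and p ≤ ν ≤ ∞ there is a constant C = C(p, ν) such that for every μ-measurable function G on X₁ × X₂, ‖G‖_{L^{p,ν}(X₁×X₂, μ)} ≤ C ( ∫_{X₁} ‖G(x₁, ·)‖_{L^{p,ν}(X₂, μ₂)}^p dμ₁(x₁) )^{1/p}. -/

import Mathlib

open MeasureTheory Set
open scoped ENNReal NNReal

/-- Decreasing rearrangement of `f` with respect to the measure `μ`. -/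
noncomputable def rearrangement {α : Type*} [MeasurableSpace α] (μ : Measure α)
    {E : Type*} [NormedAddCommGroup E] (f : α → E) (t : ℝ) : ℝ≥0∞ :=
  sInf {s : ℝ≥0∞ | μ {x | s < (‖f x‖₊ : ℝ≥0∞)} ≤ ENNReal.ofReal t}

/-- Lorentz space quasinorm `‖f‖_{L^{p,ν}(μ)}`. -/
noncomputable def lorentzNorm {α : Type*} [MeasurableSpace α] (μ : Measure α)
    {E : Type*} [NormedAddCommGroup E] (p : ℝ) (ν : ℝ≥0∞) (f : α → E) : ℝ≥0∞ :=
  if ν = ∞ then ⨆ t ∈ Set.Ioi (0:ℝ), ENNReal.ofReal (t ^ (1/p)) * rearrangement μ f t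
  else (∫⁻ t in Set.Ioi (0:ℝ),
      (ENNReal.ofReal (t ^ (1/p)) * rearrangement μ f t) ^ ν.toReal / ENNReal.ofReal t) ^ (1/ν.toReal)

namespace LorentzAux

open Function

variable {α : Type*} [MeasurableSpace α]

/-- distribution function -/
noncomputable def dist {α : Type*} [MeasurableSpace α] (μ : Measure α) (f : α → ℂ)
    (s : ℝ≥0∞) : ℝ≥0∞ :=
  μ {x | s < (‖f x‖₊ : ℝ≥0∞)}

variable {μ : Measure α} {f : α → ℂ}

lemma dist_anti : Antitone (dist μ f) := fun _ _ h =>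
  measure_mono (fun _ hx => lt_of_le_of_lt h hx)

lemma rearr_anti : Antitone (rearrangement μ f) := by
  intro t t' h
  exact sInf_le_sInf (fun s hs => le_trans hs (ENNReal.ofReal_le_ofReal h))

lemma dist_rearr_le (t : ℝ) : dist μ f (rearrangement μ f t) ≤ ENNReal.ofReal t := by
  have key : ∀ b, rearrangement μ f t < b → dist μ f b ≤ ENNReal.ofReal t := by
    intro b hb
    obtain ⟨s, hs, hsb⟩ := sInf_lt_iff.mp hb
    exact le_trans (dist_anti hsb.le) hs
  set a := rearrangement μ f t with ha
  rcases eq_or_ne a ∞ with h | h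
  · have : {x | a < (‖f x‖₊ : ℝ≥0∞)} = ∅ := by
      ext x; simp [h]
    simp [dist, this]
  · have hU : {x | a < (‖f x‖₊ : ℝ≥0∞)} = ⋃ n : ℕ, {x | a + (n : ℝ≥0∞)⁻¹ < (‖f x‖₊ : ℝ≥0∞)} := by
      ext x
      simp only [mem_setOf_eq, mem_iUnion]
      constructor
      · intro hx
        have hne : (‖f x‖₊ : ℝ≥0∞) - a ≠ 0 := by
          rw [ne_eq, tsub_eq_zero_iff_le]; exact not_le.mpr hx
        obtain ⟨n, hn⟩ := ENNReal.exists_inv_nat_lt hne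
        exact ⟨n, by
          calc a + (n : ℝ≥0∞)⁻¹ < a + ((‖f x‖₊ : ℝ≥0∞) - a) := by
                exact ENNReal.add_lt_add_left h hn
            _ = (‖f x‖₊ : ℝ≥0∞) := add_tsub_cancel_of_le hx.le⟩
      · rintro ⟨n, hn⟩
        exact lt_of_le_of_lt le_self_add hn
    have hmono : Monotone (fun n : ℕ => {x | a + (n : ℝ≥0∞)⁻¹ < (‖f x‖₊ : ℝ≥0∞)}) := by
      intro n m hnm x hx
      refine lt_of_le_of_lt (add_le_add_right ?_ a) hx
      exact ENNReal.inv_le_inv.mpr (by exact_mod_cast hnm)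
    rw [dist, hU, (hmono.directed_le).measure_iUnion]
    refine iSup_le fun n => key _ ?_
    exact ENNReal.lt_add_right h (by simp)

lemma rearr_le_iff {t : ℝ} {s : ℝ≥0∞} :
    rearrangement μ f t ≤ s ↔ dist μ f s ≤ ENNReal.ofReal t :=
  ⟨fun h => le_trans (dist_anti h) (dist_rearr_le t), fun h => sInf_le h⟩

lemma lt_rearr_iff {t : ℝ} {s : ℝ≥0∞} :
    s < rearrangement μ f t ↔ ENNReal.ofReal t < dist μ f s := by
  rw [← not_le, ← not_le, rearr_le_iff]

/-- `∫_{0<u, ofReal u < c} u^(b-1) du = c^b / b`. -/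
lemma lemL {b : ℝ} (hb : 1 ≤ b) (c : ℝ≥0∞) :
    ∫⁻ u in Ioi (0:ℝ), {u : ℝ | ENNReal.ofReal u < c}.indicator
      (fun u => ENNReal.ofReal (u ^ (b - 1))) u
      = c ^ b / ENNReal.ofReal b := by
  have hb0 : (0:ℝ) < b := lt_of_lt_of_le one_pos hb
  have hmeasset : MeasurableSet {u : ℝ | ENNReal.ofReal u < c} :=
    measurableSet_lt (ENNReal.measurable_ofReal) measurable_const
  rw [lintegral_indicator hmeasset, Measure.restrict_restrict hmeasset]
  rcases eq_or_ne c ∞ with hc | hc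
  · have hset : {u : ℝ | ENNReal.ofReal u < c} ∩ Ioi 0 = Ioi 0 := by
      ext u; simp [hc, ENNReal.ofReal_lt_top]
    rw [hc] at hset ⊢
    rw [hset]
    have htop : (∞ : ℝ≥0∞) ^ b / ENNReal.ofReal b = ∞ := by
      rw [ENNReal.top_rpow_of_pos hb0, ENNReal.top_div]
      simp [ENNReal.ofReal_lt_top]
    rw [htop, eq_top_iff]
    calc (⊤:ℝ≥0∞) = 1 * volume (Ioi (1:ℝ)) := by simp [Real.volume_Ioi]
      _ = ∫⁻ _ in Ioi (1:ℝ), 1 := by rw [setLIntegral_const, mul_comm]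
      _ ≤ ∫⁻ u in Ioi (1:ℝ), ENNReal.ofReal (u ^ (b-1)) := by
          refine setLIntegral_mono (by fun_prop) (fun u hu => ?_)
          rw [show (1:ℝ≥0∞) = ENNReal.ofReal 1 by simp]
          exact ENNReal.ofReal_le_ofReal (Real.one_le_rpow hu.le (by linarith))
      _ ≤ ∫⁻ u in Ioi (0:ℝ), ENNReal.ofReal (u ^ (b-1)) :=
          lintegral_mono_set (fun u (hu : (1:ℝ) < u) => lt_trans one_pos hu)
  · have hset : {u : ℝ | ENNReal.ofReal u < c} ∩ Ioi 0 = Ioo 0 c.toReal := by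
      ext u
      simp only [mem_inter_iff, mem_setOf_eq, mem_Ioi, mem_Ioo]
      constructor
      · rintro ⟨h1, h2⟩
        exact ⟨h2, (ENNReal.ofReal_lt_iff_lt_toReal h2.le hc).mp h1⟩
      · rintro ⟨h1, h2⟩
        exact ⟨(ENNReal.ofReal_lt_iff_lt_toReal h1.le hc).mpr h2, h1⟩
    rw [hset]
    have hc0 : 0 ≤ c.toReal := ENNReal.toReal_nonneg
    have key : ∫⁻ u in Ioo (0:ℝ) c.toReal, ENNReal.ofReal (u ^ (b-1))
        = ENNReal.ofReal (c.toReal ^ b / b) := by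
      rcases eq_or_lt_of_le hc0 with h0 | h0
      · rw [← h0]; simp [Real.zero_rpow (ne_of_gt hb0)]
      · have hint : IntegrableOn (fun u : ℝ => u ^ (b-1)) (Ioo 0 c.toReal) := by
          have := intervalIntegral.intervalIntegrable_rpow' (a := 0) (b := c.toReal)
            (r := b - 1) (by linarith)
          rw [intervalIntegrable_iff_integrableOn_Ioo_of_le hc0] at this
          exact this
        rw [← ofReal_integral_eq_lintegral_ofReal hint]
        · congr 1
          rw [← MeasureTheory.integral_Ioc_eq_integral_Ioo,
            ← intervalIntegral.integral_of_le hc0,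
            integral_rpow (Or.inl (by linarith))]
          rw [sub_add_cancel, Real.zero_rpow (ne_of_gt hb0)]
          ring
        · filter_upwards [self_mem_ae_restrict measurableSet_Ioo] with u hu
          exact Real.rpow_nonneg hu.1.le _
    rw [key]
    rw [ENNReal.ofReal_div_of_pos hb0]
    congr 1
    rw [← ENNReal.ofReal_rpow_of_nonneg hc0 hb0.le, ENNReal.ofReal_toReal hc]

lemma identity {q a : ℝ} (hq : 1 ≤ q) (ha : 1 ≤ a) :
    ENNReal.ofReal a * ∫⁻ t in Ioi (0:ℝ),
        ENNReal.ofReal (t ^ (a-1)) * (rearrangement μ f t) ^ q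
      = ENNReal.ofReal q * ∫⁻ s in Ioi (0:ℝ),
        ENNReal.ofReal (s ^ (q-1)) * (dist μ f (ENNReal.ofReal s)) ^ a := by
  have hq0 : (0:ℝ) < q := lt_of_lt_of_le one_pos hq
  have ha0 : (0:ℝ) < a := lt_of_lt_of_le one_pos ha
  have hqne : ENNReal.ofReal q ≠ 0 := by simp [hq0]
  have hqnt : ENNReal.ofReal q ≠ ∞ := ENNReal.ofReal_ne_top
  have hane : ENNReal.ofReal a ≠ 0 := by simp [ha0]
  have hant : ENNReal.ofReal a ≠ ∞ := ENNReal.ofReal_ne_top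
  set K : Set (ℝ × ℝ) := {p : ℝ × ℝ | ENNReal.ofReal p.2 < rearrangement μ f p.1} with hK
  have hKmeas : MeasurableSet K := by
    apply measurableSet_lt
    · exact ENNReal.measurable_ofReal.comp measurable_snd
    · exact rearr_anti.measurable.comp measurable_fst
  set k : ℝ → ℝ → ℝ≥0∞ := fun t s =>
    K.indicator (fun p : ℝ × ℝ => ENNReal.ofReal (p.1 ^ (a-1)) * ENNReal.ofReal (p.2 ^ (q-1))) (t, s)
    with hk
  have hkmeas : Measurable (uncurry k) := by
    have : uncurry k = K.indicator
        (fun p : ℝ × ℝ => ENNReal.ofReal (p.1 ^ (a-1)) * ENNReal.ofReal (p.2 ^ (q-1))) := by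
      ext p; rcases p with ⟨t, s⟩; rfl
    rw [this]
    have hfm : Measurable (fun p : ℝ × ℝ =>
        ENNReal.ofReal (p.1 ^ (a-1)) * ENNReal.ofReal (p.2 ^ (q-1))) := by measurability
    exact hfm.indicator hKmeas
  have hA : ∀ t : ℝ, ∫⁻ s in Ioi (0:ℝ), k t s
      = ENNReal.ofReal (t ^ (a-1)) * ((rearrangement μ f t) ^ q / ENNReal.ofReal q) := by
    intro t
    have h1 : ∀ s : ℝ, k t s = ENNReal.ofReal (t ^ (a-1)) *
        ({s : ℝ | ENNReal.ofReal s < rearrangement μ f t}.indicator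
          (fun s => ENNReal.ofReal (s ^ (q-1))) s) := by
      intro s
      rw [hk]
      simp only [Set.indicator_apply, hK, mem_setOf_eq]
      by_cases h : ENNReal.ofReal s < rearrangement μ f t <;> simp [h]
    simp_rw [h1]
    rw [lintegral_const_mul' _ _ ENNReal.ofReal_ne_top, lemL hq _]
  have hB : ∀ s : ℝ, ∫⁻ t in Ioi (0:ℝ), k t s
      = ENNReal.ofReal (s ^ (q-1)) * ((dist μ f (ENNReal.ofReal s)) ^ a / ENNReal.ofReal a) := by
    intro s
    have h1 : ∀ t : ℝ, k t s = ENNReal.ofReal (s ^ (q-1)) *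
        ({t : ℝ | ENNReal.ofReal t < dist μ f (ENNReal.ofReal s)}.indicator
          (fun t => ENNReal.ofReal (t ^ (a-1))) t) := by
      intro t
      rw [hk]
      simp only [Set.indicator_apply, hK, mem_setOf_eq, ← lt_rearr_iff]
      by_cases h : ENNReal.ofReal s < rearrangement μ f t <;> simp [h, mul_comm]
    simp_rw [h1]
    rw [lintegral_const_mul' _ _ ENNReal.ofReal_ne_top, lemL ha _]
  have hswap : ∫⁻ t in Ioi (0:ℝ), ∫⁻ s in Ioi (0:ℝ), k t s
      = ∫⁻ s in Ioi (0:ℝ), ∫⁻ t in Ioi (0:ℝ), k t s :=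
    lintegral_lintegral_swap hkmeas.aemeasurable
  have e1 : ∫⁻ t in Ioi (0:ℝ), ENNReal.ofReal (t ^ (a-1)) * (rearrangement μ f t) ^ q
      = ENNReal.ofReal q * ∫⁻ t in Ioi (0:ℝ), ∫⁻ s in Ioi (0:ℝ), k t s := by
    rw [← lintegral_const_mul' _ _ hqnt]
    refine lintegral_congr fun t => ?_
    rw [hA t, ← mul_assoc, mul_comm (ENNReal.ofReal q), mul_assoc,
      ENNReal.mul_div_cancel hqne hqnt]
  have e2 : ∫⁻ s in Ioi (0:ℝ), ENNReal.ofReal (s ^ (q-1)) * (dist μ f (ENNReal.ofReal s)) ^ a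
      = ENNReal.ofReal a * ∫⁻ s in Ioi (0:ℝ), ∫⁻ t in Ioi (0:ℝ), k t s := by
    rw [← lintegral_const_mul' _ _ hant]
    refine lintegral_congr fun s => ?_
    rw [hB s, ← mul_assoc, mul_comm (ENNReal.ofReal a), mul_assoc,
      ENNReal.mul_div_cancel hane hant]
  rw [e1, e2, hswap, ← mul_assoc, ← mul_assoc, mul_comm (ENNReal.ofReal a)]

lemma iSup_rpow {ι : Sort*} (g : ι → ℝ≥0∞) {r : ℝ} (hr : 0 < r) :
    (⨆ i, g i) ^ r = ⨆ i, (g i) ^ r := by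
  refine le_antisymm ?_ (iSup_le fun i => ENNReal.rpow_le_rpow (le_iSup g i) hr.le)
  have h : (⨆ i, g i) ≤ (⨆ i, (g i) ^ r) ^ (1/r) := by
    refine iSup_le fun i => ?_
    calc g i = ((g i) ^ r) ^ (1/r) := by
          rw [← ENNReal.rpow_mul]; rw [mul_one_div, div_self hr.ne', ENNReal.rpow_one]
      _ ≤ _ := ENNReal.rpow_le_rpow (le_iSup (fun j => g j ^ r) i) (by positivity)
  calc (⨆ i, g i) ^ r ≤ ((⨆ i, (g i) ^ r) ^ (1/r)) ^ r := ENNReal.rpow_le_rpow h hr.le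
    _ = ⨆ i, (g i) ^ r := by
        rw [← ENNReal.rpow_mul, one_div, inv_mul_cancel₀ hr.ne', ENNReal.rpow_one]
/-- Minkowski's integral inequality for `ℝ≥0∞`-valued functions, exponent `a ≥ 1`. -/
lemma minkowski {X : Type} [MeasurableSpace X] (μ : Measure X) [SigmaFinite μ]
    {f : X → ℝ → ℝ≥0∞} (hf : Measurable (uncurry f)) {a : ℝ} (ha : 1 ≤ a) :
    (∫⁻ s in Ioi (0:ℝ), (∫⁻ x, f x s ∂μ) ^ a) ^ (1/a)
      ≤ ∫⁻ x, (∫⁻ s in Ioi (0:ℝ), (f x s) ^ a) ^ (1/a) ∂μ := by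
  set σ : Measure ℝ := volume.restrict (Ioi (0:ℝ)) with hσ
  rcases eq_or_lt_of_le ha with ha1 | ha1
  · rw [← ha1]
    simp only [ENNReal.rpow_one, one_div_one]
    rw [lintegral_lintegral_swap hf.aemeasurable]
  have ha0 : (0:ℝ) < a := lt_of_lt_of_le one_pos ha
  have ha1' : a - 1 > 0 := by linarith
  set a' : ℝ := a / (a - 1) with ha'
  have hconj : a'.HolderConjugate a :=
    ((Real.holderConjugate_iff_eq_conjExponent ha1).mpr rfl).symm
  have hF : Measurable (fun s => ∫⁻ x, f x s ∂μ) := hf.lintegral_prod_left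
  set F : ℝ → ℝ≥0∞ := fun s => ∫⁻ x, f x s ∂μ with hFdef
  set R : ℝ≥0∞ := ∫⁻ x, (∫⁻ s, (f x s) ^ a ∂σ) ^ (1/a) ∂μ with hR
  set Fn : ℕ → ℝ → ℝ≥0∞ :=
    fun n s => (spanningSets σ n).indicator (fun s' => min (F s') (n : ℝ≥0∞)) s with hFndef
  have hFnmeas : ∀ n, Measurable (Fn n) := fun n =>
    (hF.min measurable_const).indicator (measurableSet_spanningSets σ n)
  have hFn_le : ∀ n s, Fn n s ≤ F s := by
    intro n s
    by_cases hs : s ∈ spanningSets σ n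
    · rw [hFndef]; simp only [indicator_of_mem hs]; exact min_le_left _ _
    · rw [hFndef]; simp only [indicator_of_notMem hs]; exact zero_le
  have hFn_le_n : ∀ n s, Fn n s ≤ (n : ℝ≥0∞) := by
    intro n s
    by_cases hs : s ∈ spanningSets σ n
    · rw [hFndef]; simp only [indicator_of_mem hs]; exact min_le_right _ _
    · rw [hFndef]; simp only [indicator_of_notMem hs]; exact zero_le
  have hFn_ne_top : ∀ n s, Fn n s ≠ ∞ :=
    fun n s => ((hFn_le_n n s).trans_lt (ENNReal.natCast_lt_top n)).ne
  have hFn_mono : Monotone Fn := by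
    intro n m hnm s
    by_cases hs : s ∈ spanningSets σ n
    · rw [hFndef]
      simp only [indicator_of_mem hs, indicator_of_mem (monotone_spanningSets σ hnm hs)]
      exact min_le_min le_rfl (by exact_mod_cast hnm)
    · rw [hFndef]; simp only [indicator_of_notMem hs]; exact zero_le
  have hFn_sup : ∀ s, ⨆ n, Fn n s = F s := by
    intro s
    refine le_antisymm (iSup_le fun n => hFn_le n s) ?_
    obtain ⟨m, hm⟩ : ∃ m, s ∈ spanningSets σ m := by
      have := iUnion_spanningSets σ
      have hs : s ∈ ⋃ n, spanningSets σ n := by rw [this]; trivial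
      exact mem_iUnion.mp hs
    have h1 : F s = ⨆ k : ℕ, min (F s) (k : ℝ≥0∞) := by
      refine le_antisymm ?_ (iSup_le fun k => min_le_left _ _)
      rcases eq_or_ne (F s) ∞ with h | h
      · rw [h]
        calc (⊤:ℝ≥0∞) = ⨆ k : ℕ, (k:ℝ≥0∞) := ENNReal.iSup_natCast.symm
          _ ≤ ⨆ k : ℕ, min (⊤:ℝ≥0∞) (k:ℝ≥0∞) := iSup_mono fun k => le_min le_top le_rfl
      · obtain ⟨k, hk⟩ := ENNReal.exists_nat_gt h
        exact le_iSup_of_le k (le_min le_rfl hk.le)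
    rw [h1]
    refine iSup_le fun k => le_iSup_of_le (max m k) ?_
    have hmem : s ∈ spanningSets σ (max m k) := monotone_spanningSets σ (le_max_left m k) hm
    rw [hFndef]
    simp only [indicator_of_mem hmem]
    exact min_le_min le_rfl (by exact_mod_cast le_max_right m k)
  set A : ℕ → ℝ≥0∞ := fun n => ∫⁻ s, (Fn n s) ^ a ∂σ with hA
  have hrpowmeas : ∀ (c : ℝ), Measurable fun y : ℝ≥0∞ => y ^ c := fun c => by measurability
  have hAfin : ∀ n, A n ≠ ∞ := by
    intro n
    have hle : A n ≤ (n : ℝ≥0∞) ^ a * σ (spanningSets σ n) := by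
      have hpoint : ∀ s, (Fn n s) ^ a ≤
          (spanningSets σ n).indicator (fun _ => (n : ℝ≥0∞) ^ a) s := by
        intro s
        by_cases hs : s ∈ spanningSets σ n
        · rw [indicator_of_mem hs]
          exact ENNReal.rpow_le_rpow (hFn_le_n n s) ha0.le
        · rw [indicator_of_notMem hs, hFndef]
          simp only [indicator_of_notMem hs]
          rw [ENNReal.zero_rpow_of_pos ha0]
      calc A n ≤ ∫⁻ s, (spanningSets σ n).indicator (fun _ => (n : ℝ≥0∞) ^ a) s ∂σ :=
            lintegral_mono hpoint
        _ = (n : ℝ≥0∞) ^ a * σ (spanningSets σ n) := by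
            rw [lintegral_indicator (measurableSet_spanningSets σ n), setLIntegral_const]
    exact (hle.trans_lt (ENNReal.mul_lt_top
      (ENNReal.rpow_lt_top_of_nonneg ha0.le (ENNReal.natCast_ne_top n))
      (measure_spanningSets_lt_top σ n))).ne
  have hpt : ∀ x : ℝ≥0∞, x ^ a = x ^ (a-1) * x := by
    intro x
    nth_rewrite 1 [show a = (a-1) + 1 by ring]
    rw [ENNReal.rpow_add_of_nonneg _ _ (by linarith) zero_le_one, ENNReal.rpow_one]
  have haa' : (a - 1) * a' = a := by rw [ha']; field_simp
  have key : ∀ n, A n ≤ A n ^ (1/a') * R := by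
    intro n
    have hCeq : (∫⁻ s, ((Fn n s) ^ (a-1)) ^ a' ∂σ) = A n := by
      refine lintegral_congr fun s => ?_
      rw [← ENNReal.rpow_mul, haa']
    calc A n = ∫⁻ s, (Fn n s) ^ (a-1) * Fn n s ∂σ := lintegral_congr fun s => hpt _
      _ ≤ ∫⁻ s, (Fn n s) ^ (a-1) * F s ∂σ :=
          lintegral_mono fun s => mul_le_mul_right (hFn_le n s) _
      _ = ∫⁻ s, ∫⁻ x, (Fn n s) ^ (a-1) * f x s ∂μ ∂σ := by
          refine lintegral_congr fun s => ?_
          rw [lintegral_const_mul' _ _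
            (ENNReal.rpow_ne_top_of_nonneg (by linarith) (hFn_ne_top n s))]
      _ = ∫⁻ x, ∫⁻ s, (Fn n s) ^ (a-1) * f x s ∂σ ∂μ := by
          refine (lintegral_lintegral_swap ?_).symm
          have h1 : Measurable fun p : X × ℝ => (Fn n p.2) ^ (a-1) :=
            (hrpowmeas (a-1)).comp ((hFnmeas n).comp measurable_snd)
          exact (h1.mul hf).aemeasurable
      _ ≤ ∫⁻ x, (∫⁻ s, ((Fn n s) ^ (a-1)) ^ a' ∂σ) ^ (1/a')
            * (∫⁻ s, (f x s) ^ a ∂σ) ^ (1/a) ∂μ := by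
          refine lintegral_mono fun x => ?_
          have hHolder := ENNReal.lintegral_mul_le_Lp_mul_Lq σ hconj
            (((hrpowmeas (a-1)).comp (hFnmeas n)).aemeasurable)
            ((hf.comp (measurable_prodMk_left : Measurable (Prod.mk x))).aemeasurable)
          simpa [Pi.mul_apply] using hHolder
      _ = A n ^ (1/a') * R := by
          rw [hR]
          simp_rw [hCeq]
          rw [lintegral_const_mul' _ _
            (ENNReal.rpow_ne_top_of_nonneg (by positivity) (hAfin n))]
  have hn : ∀ n, A n ^ (1/a) ≤ R := by
    intro n
    rcases eq_or_ne (A n) 0 with h0 | h0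
    · rw [h0, ENNReal.zero_rpow_of_pos (by positivity)]; exact zero_le
    · have hsplit : A n = A n ^ (1/a') * A n ^ (1/a) := by
        rw [← ENNReal.rpow_add _ _ h0 (hAfin n), show 1/a' + 1/a = 1 by
          simpa [one_div] using hconj.inv_add_inv_eq_one, ENNReal.rpow_one]
      have hmul : A n ^ (1/a') * A n ^ (1/a) ≤ A n ^ (1/a') * R := hsplit ▸ key n
      have hne : A n ^ (1/a') ≠ 0 := by
        simp only [ne_eq, ENNReal.rpow_eq_zero_iff, not_or]
        constructor
        · intro h; exact h0 h.1
        · intro h; exact hAfin n h.1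
      have hnt : A n ^ (1/a') ≠ ⊤ := ENNReal.rpow_ne_top_of_nonneg (by positivity) (hAfin n)
      exact (ENNReal.mul_le_mul_iff_right hne hnt).mp hmul
  have hmct : ∫⁻ s, (F s) ^ a ∂σ = ⨆ n, A n := by
    have h1 : ∀ s, (F s) ^ a = ⨆ n, (Fn n s) ^ a := fun s => by
      rw [← hFn_sup s, iSup_rpow _ ha0]
    calc ∫⁻ s, (F s) ^ a ∂σ = ∫⁻ s, ⨆ n, (Fn n s) ^ a ∂σ := lintegral_congr h1
      _ = ⨆ n, A n := lintegral_iSup (fun n => (hrpowmeas a).comp (hFnmeas n))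
          (fun n m hnm s => ENNReal.rpow_le_rpow (hFn_mono hnm s) ha0.le)
  calc (∫⁻ s, (F s) ^ a ∂σ) ^ (1/a) = (⨆ n, A n) ^ (1/a) := by rw [hmct]
    _ = ⨆ n, A n ^ (1/a) := iSup_rpow A (by positivity)
    _ ≤ R := iSup_le hn


lemma rpow_biSup_Iio (x : ℝ≥0∞) {r : ℝ} (hr : 0 < r) :
    x ^ r = ⨆ s ∈ Iio x, s ^ r := by
  refine le_antisymm ?_ (iSup₂_le fun s hs => ENNReal.rpow_le_rpow hs.le hr.le)
  rcases eq_or_ne x 0 with h0 | h0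
  · simp [h0, ENNReal.zero_rpow_of_pos hr]
  by_contra hlt
  push_neg at hlt
  set y := ⨆ s ∈ Iio x, s ^ r with hy
  have h1 : y ^ (1/r) < x := by
    have := ENNReal.rpow_lt_rpow hlt (by positivity : (0:ℝ) < 1/r)
    rwa [← ENNReal.rpow_mul, mul_one_div, div_self hr.ne', ENNReal.rpow_one] at this
  obtain ⟨z, hz1, hz2⟩ := exists_between h1
  have hz3 : z ^ r ≤ y := le_iSup₂_of_le z hz2 le_rfl
  have hz4 : z ≤ y ^ (1/r) := by
    have := ENNReal.rpow_le_rpow hz3 (by positivity : (0:ℝ) ≤ 1/r)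
    rwa [← ENNReal.rpow_mul, mul_one_div, div_self hr.ne', ENNReal.rpow_one] at this
  exact absurd hz4 (not_le.mpr hz1)

lemma biSup_ofReal_lt (c : ℝ≥0∞) :
    (⨆ (t : ℝ) (_ : ENNReal.ofReal t < c), ENNReal.ofReal t) = c := by
  refine le_antisymm (iSup₂_le fun t ht => ht.le) ?_
  by_contra hlt
  push_neg at hlt
  set y := ⨆ (t : ℝ) (_ : ENNReal.ofReal t < c), ENNReal.ofReal t with hy
  obtain ⟨z, hz1, hz2⟩ := exists_between hlt
  have hznt : z ≠ ⊤ := (hz2.trans_le le_top).ne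
  have : z ≤ y := by
    have hz3 : ENNReal.ofReal z.toReal < c := by rwa [ENNReal.ofReal_toReal hznt]
    calc z = ENNReal.ofReal z.toReal := (ENNReal.ofReal_toReal hznt).symm
      _ ≤ y := le_iSup₂_of_le z.toReal hz3 le_rfl
  exact absurd this (not_le.mpr hz1)

lemma sup_pow_eq (μ : Measure α) (f : α → ℂ) {p : ℝ} (hp : 0 < p) :
    (⨆ t ∈ Ioi (0:ℝ), ENNReal.ofReal (t ^ (1/p)) * rearrangement μ f t) ^ p
      = ⨆ s : ℝ≥0∞, s ^ p * dist μ f s := by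
  have hsimp : ∀ t : ℝ, 0 < t →
      (ENNReal.ofReal (t ^ (1/p)) * rearrangement μ f t) ^ p
        = ENNReal.ofReal t * (rearrangement μ f t) ^ p := by
    intro t ht
    rw [ENNReal.mul_rpow_of_nonneg _ _ hp.le,
      ENNReal.ofReal_rpow_of_pos (Real.rpow_pos_of_pos ht _),
      ← Real.rpow_mul ht.le, one_div_mul_cancel hp.ne', Real.rpow_one]
  rw [iSup_rpow _ hp]
  have hlevel2 : ∀ t : ℝ,
      (⨆ _ : t ∈ Ioi (0:ℝ), ENNReal.ofReal (t ^ (1/p)) * rearrangement μ f t) ^ p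
        = ⨆ _ : t ∈ Ioi (0:ℝ), (ENNReal.ofReal (t ^ (1/p)) * rearrangement μ f t) ^ p :=
    fun t => iSup_rpow _ hp
  simp_rw [hlevel2]
  refine le_antisymm ?_ ?_
  · refine iSup₂_le fun t ht => ?_
    rw [hsimp t ht, rpow_biSup_Iio (rearrangement μ f t) hp]
    rw [ENNReal.mul_iSup]
    simp_rw [ENNReal.mul_iSup]
    refine iSup₂_le fun s hs => ?_
    have hd : ENNReal.ofReal t < dist μ f s := lt_rearr_iff.mp hs
    calc ENNReal.ofReal t * s ^ p ≤ dist μ f s * s ^ p := mul_le_mul_left hd.le _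
      _ = s ^ p * dist μ f s := mul_comm _ _
      _ ≤ ⨆ s' : ℝ≥0∞, s' ^ p * dist μ f s' := le_iSup (fun s' => s' ^ p * dist μ f s') s
  · refine iSup_le fun s => ?_
    rw [show dist μ f s = ⨆ (t : ℝ) (_ : ENNReal.ofReal t < dist μ f s), ENNReal.ofReal t from
      (biSup_ofReal_lt _).symm]
    rw [ENNReal.mul_iSup]
    simp_rw [ENNReal.mul_iSup]
    refine iSup₂_le fun t ht => ?_
    rcases le_or_gt t 0 with ht0 | ht0
    · rw [ENNReal.ofReal_eq_zero.mpr ht0, mul_zero]; exact zero_le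
    · have hst : s < rearrangement μ f t := lt_rearr_iff.mpr ht
      have hle : s ^ p * ENNReal.ofReal t
          ≤ (ENNReal.ofReal (t ^ (1/p)) * rearrangement μ f t) ^ p := by
        rw [hsimp t ht0, mul_comm]
        exact mul_le_mul_right (ENNReal.rpow_le_rpow hst.le hp.le) _
      exact hle.trans (le_iSup₂_of_le t ht0 le_rfl)

lemma dist_prod {X₁ X₂ : Type} [MeasurableSpace X₁] [MeasurableSpace X₂]
    (μ₁ : Measure X₁) (μ₂ : Measure X₂) [SigmaFinite μ₂] (G : X₁ × X₂ → ℂ)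
    (hG : Measurable G) (s : ℝ≥0∞) :
    dist (μ₁.prod μ₂) G s = ∫⁻ x₁, dist μ₂ (fun x₂ => G (x₁, x₂)) s ∂μ₁ := by
  have hset : MeasurableSet {z : X₁ × X₂ | s < (‖G z‖₊ : ℝ≥0∞)} :=
    measurableSet_lt measurable_const hG.nnnorm.coe_nnreal_ennreal
  rw [dist, Measure.prod_apply hset]
  rfl

lemma step1 (μ : Measure α) (f : α → ℂ) {p q : ℝ} (hp0 : 0 < p) (hq0 : 0 ≤ q) :
    ∫⁻ t in Ioi (0:ℝ),
        (ENNReal.ofReal (t ^ (1/p)) * rearrangement μ f t) ^ q / ENNReal.ofReal t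
      = ∫⁻ t in Ioi (0:ℝ), ENNReal.ofReal (t ^ (q/p - 1)) * (rearrangement μ f t) ^ q := by
  refine setLIntegral_congr_fun measurableSet_Ioi (fun t ht => ?_)
  have ht : (0:ℝ) < t := ht
  rw [ENNReal.mul_rpow_of_nonneg _ _ hq0,
    ENNReal.ofReal_rpow_of_pos (Real.rpow_pos_of_pos ht _),
    ← Real.rpow_mul ht.le, show 1/p*q = q/p by ring]
  rw [div_eq_mul_inv, mul_right_comm, ← div_eq_mul_inv]
  congr 1
  have hh : t ^ (q/p - 1) = t ^ (q/p) / t := by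
    rw [Real.rpow_sub ht, Real.rpow_one]
  rw [hh, ENNReal.ofReal_div_of_pos ht]

end LorentzAux

open LorentzAux Function

theorem lorentz_fubini (p : ℝ) (ν : ℝ≥0∞) (hp : 1 ≤ p) (hpν : ENNReal.ofReal p ≤ ν) :
    ∃ C : ℝ, 0 < C ∧
      ∀ (X₁ X₂ : Type) (_ : MeasurableSpace X₁) (_ : MeasurableSpace X₂)
        (μ₁ : Measure X₁) (μ₂ : Measure X₂), SigmaFinite μ₁ → SigmaFinite μ₂ →
        ∀ (G : X₁ × X₂ → ℂ), Measurable G →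
        lorentzNorm (μ₁.prod μ₂) p ν G ≤
          ENNReal.ofReal C *
            (∫⁻ x₁, lorentzNorm μ₂ p ν (fun x₂ => G (x₁, x₂)) ^ p ∂μ₁) ^ (1/p) := by
  have hp0 : (0:ℝ) < p := lt_of_lt_of_le one_pos hp
  refine ⟨1, one_pos, ?_⟩
  intro X₁ X₂ m₁ m₂ μ₁ μ₂ hσ₁ hσ₂ G hG
  haveI := hσ₁; haveI := hσ₂
  rw [ENNReal.ofReal_one, one_mul]
  rcases eq_or_ne ν ∞ with hν | hν
  · -- weak case
    simp only [lorentzNorm, if_pos hν]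
    set L : ℝ≥0∞ :=
      ⨆ t ∈ Ioi (0:ℝ), ENNReal.ofReal (t ^ (1/p)) * rearrangement (μ₁.prod μ₂) G t with hL
    calc L = (L ^ p) ^ (1/p) := by
          rw [← ENNReal.rpow_mul, mul_one_div, div_self hp0.ne', ENNReal.rpow_one]
      _ = ((⨆ s : ℝ≥0∞, s ^ p * dist (μ₁.prod μ₂) G s)) ^ (1/p) := by
          rw [hL, sup_pow_eq _ _ hp0]
      _ ≤ (∫⁻ x₁, ⨆ s : ℝ≥0∞, s ^ p * dist μ₂ (fun x₂ => G (x₁, x₂)) s ∂μ₁) ^ (1/p) := by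
          refine ENNReal.rpow_le_rpow ?_ (by positivity)
          refine iSup_le fun s => ?_
          have hset : MeasurableSet {z : X₁ × X₂ | s < (‖G z‖₊ : ℝ≥0∞)} :=
            measurableSet_lt measurable_const hG.nnnorm.coe_nnreal_ennreal
          have hdmeas : Measurable fun x₁ => dist μ₂ (fun x₂ => G (x₁, x₂)) s :=
            measurable_measure_prodMk_left hset
          rw [dist_prod μ₁ μ₂ G hG s, ← lintegral_const_mul _ hdmeas]
          exact lintegral_mono fun x₁ =>
            le_iSup (fun s' => s' ^ p * dist μ₂ (fun x₂ => G (x₁, x₂)) s') s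
      _ = (∫⁻ x₁, (⨆ t ∈ Ioi (0:ℝ),
            ENNReal.ofReal (t ^ (1/p)) * rearrangement μ₂ (fun x₂ => G (x₁, x₂)) t) ^ p
              ∂μ₁) ^ (1/p) := by
          congr 1
          exact lintegral_congr fun x₁ => (sup_pow_eq μ₂ _ hp0).symm
  · -- strong case
    simp only [lorentzNorm, if_neg hν]
    set q := ν.toReal with hqdef
    have hpq : p ≤ q := by
      have := ENNReal.toReal_mono hν hpν
      rwa [ENNReal.toReal_ofReal hp0.le] at this
    have hq1 : (1:ℝ) ≤ q := le_trans hp hpq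
    have hq0 : (0:ℝ) < q := lt_of_lt_of_le one_pos hq1
    set a := q / p with hadef
    have ha1 : (1:ℝ) ≤ a := (one_le_div hp0).mpr hpq
    have ha0 : (0:ℝ) < a := lt_of_lt_of_le one_pos ha1
    set cA := ENNReal.ofReal a with hcA
    set cQ := ENNReal.ofReal q with hcQ
    have hcAne : cA ≠ 0 := by simp [hcA, ha0]
    have hcAnt : cA ≠ ∞ := ENNReal.ofReal_ne_top
    have hcQnt : cQ ≠ ∞ := ENNReal.ofReal_ne_top
    -- rewrite both sides via step1
    have hstep1 : ∫⁻ t in Ioi (0:ℝ),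
        (ENNReal.ofReal (t ^ (1/p)) * rearrangement (μ₁.prod μ₂) G t) ^ q / ENNReal.ofReal t
        = ∫⁻ t in Ioi (0:ℝ),
          ENNReal.ofReal (t ^ (a - 1)) * (rearrangement (μ₁.prod μ₂) G t) ^ q :=
      step1 (μ₁.prod μ₂) G hp0 hq0.le
    set Tprod := ∫⁻ t in Ioi (0:ℝ),
      ENNReal.ofReal (t ^ (a - 1)) * (rearrangement (μ₁.prod μ₂) G t) ^ q with hTprod
    set T₂ : X₁ → ℝ≥0∞ := fun x₁ => ∫⁻ t in Ioi (0:ℝ),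
      ENNReal.ofReal (t ^ (a - 1)) * (rearrangement μ₂ (fun x₂ => G (x₁, x₂)) t) ^ q with hT₂
    set S₂ : X₁ → ℝ≥0∞ := fun x₁ => ∫⁻ s in Ioi (0:ℝ),
      ENNReal.ofReal (s ^ (q - 1)) * (dist μ₂ (fun x₂ => G (x₁, x₂)) (ENNReal.ofReal s)) ^ a
      with hS₂
    set Sprod := ∫⁻ s in Ioi (0:ℝ),
      ENNReal.ofReal (s ^ (q - 1)) * (dist (μ₁.prod μ₂) G (ENNReal.ofReal s)) ^ a with hSprod
    set Rp := ∫⁻ x₁, (T₂ x₁) ^ (1/a) ∂μ₁ with hRp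
    have hinner : ∀ x₁ : X₁,
        ((∫⁻ t in Ioi (0:ℝ), (ENNReal.ofReal (t ^ (1/p)) *
            rearrangement μ₂ (fun x₂ => G (x₁, x₂)) t) ^ q / ENNReal.ofReal t) ^ (1/q)) ^ p
          = (T₂ x₁) ^ (1/a) := by
      intro x₁
      rw [step1 μ₂ (fun x₂ => G (x₁, x₂)) hp0 hq0.le, ← ENNReal.rpow_mul]
      congr 1
      rw [hadef]
      field_simp
    have hgoalrhs : ∫⁻ x₁,
        ((∫⁻ t in Ioi (0:ℝ), (ENNReal.ofReal (t ^ (1/p)) *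
            rearrangement μ₂ (fun x₂ => G (x₁, x₂)) t) ^ q / ENNReal.ofReal t) ^ (1/q)) ^ p ∂μ₁
          = Rp := lintegral_congr hinner
    rw [hstep1, hgoalrhs]
    -- identities
    have hidprod : cA * Tprod = cQ * Sprod := identity hq1 ha1
    have hid₂ : ∀ x₁, cA * T₂ x₁ = cQ * S₂ x₁ := fun x₁ => identity hq1 ha1
    -- Minkowski
    set F : X₁ → ℝ → ℝ≥0∞ := fun x₁ s =>
      (ENNReal.ofReal (s ^ (q - 1))) ^ (1/a) * dist μ₂ (fun x₂ => G (x₁, x₂)) (ENNReal.ofReal s)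
      with hF
    have hFmeas : Measurable (uncurry F) := by
      have h1 : Measurable fun w : X₁ × ℝ => (ENNReal.ofReal (w.2 ^ (q - 1))) ^ (1/a) := by
        measurability
      have hset : MeasurableSet {w : (X₁ × ℝ) × X₂ |
          ENNReal.ofReal w.1.2 < (‖G (w.1.1, w.2)‖₊ : ℝ≥0∞)} := by
        apply measurableSet_lt
        · exact ENNReal.measurable_ofReal.comp (measurable_snd.comp measurable_fst)
        · exact (hG.comp ((measurable_fst.comp measurable_fst).prodMk
            measurable_snd)).nnnorm.coe_nnreal_ennreal
      have h2 : Measurable fun w : X₁ × ℝ =>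
          dist μ₂ (fun x₂ => G (w.1, x₂)) (ENNReal.ofReal w.2) :=
        measurable_measure_prodMk_left hset
      exact h1.mul h2
    have hFne : ∀ s : ℝ, ((ENNReal.ofReal (s ^ (q - 1))) ^ (1/a) : ℝ≥0∞) ≠ ∞ :=
      fun s => ENNReal.rpow_ne_top_of_nonneg (by positivity) ENNReal.ofReal_ne_top
    have hFa : ∀ x₁ s, (F x₁ s) ^ a = ENNReal.ofReal (s ^ (q - 1)) *
        (dist μ₂ (fun x₂ => G (x₁, x₂)) (ENNReal.ofReal s)) ^ a := by
      intro x₁ s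
      rw [hF]
      rw [ENNReal.mul_rpow_of_nonneg _ _ ha0.le, ← ENNReal.rpow_mul,
        one_div_mul_cancel ha0.ne', ENNReal.rpow_one]
    have hFsum : ∀ s : ℝ, (∫⁻ x₁, F x₁ s ∂μ₁) ^ a = ENNReal.ofReal (s ^ (q - 1)) *
        (dist (μ₁.prod μ₂) G (ENNReal.ofReal s)) ^ a := by
      intro s
      rw [hF]
      simp only []
      rw [lintegral_const_mul' _ _ (hFne s)]
      rw [ENNReal.mul_rpow_of_nonneg _ _ ha0.le, ← ENNReal.rpow_mul,
        one_div_mul_cancel ha0.ne', ENNReal.rpow_one, dist_prod μ₁ μ₂ G hG]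
    have hmink := minkowski μ₁ hFmeas ha1
    have hmink' : Sprod ^ (1/a) ≤ ∫⁻ x₁, (S₂ x₁) ^ (1/a) ∂μ₁ := by
      have e1 : (∫⁻ s in Ioi (0:ℝ), (∫⁻ x₁, F x₁ s ∂μ₁) ^ a) = Sprod :=
        lintegral_congr fun s => hFsum s
      have e2 : ∀ x₁, (∫⁻ s in Ioi (0:ℝ), (F x₁ s) ^ a) = S₂ x₁ :=
        fun x₁ => lintegral_congr fun s => hFa x₁ s
      rw [e1] at hmink
      calc Sprod ^ (1/a) ≤ ∫⁻ x₁, (∫⁻ s in Ioi (0:ℝ), (F x₁ s) ^ a) ^ (1/a) ∂μ₁ := hmink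
        _ = ∫⁻ x₁, (S₂ x₁) ^ (1/a) ∂μ₁ := lintegral_congr fun x₁ => by rw [e2 x₁]
    -- combine
    have hcAa_ne : (cA ^ (1/a) : ℝ≥0∞) ≠ 0 := by
      simp only [ne_eq, ENNReal.rpow_eq_zero_iff, not_or, not_and]
      exact ⟨fun h => absurd h hcAne, fun h => absurd h hcAnt⟩
    have hcAa_nt : (cA ^ (1/a) : ℝ≥0∞) ≠ ∞ :=
      ENNReal.rpow_ne_top_of_nonneg (by positivity) hcAnt
    have hchain : cA ^ (1/a) * Tprod ^ (1/a) ≤ cA ^ (1/a) * Rp := by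
      calc cA ^ (1/a) * Tprod ^ (1/a) = (cA * Tprod) ^ (1/a) :=
            (ENNReal.mul_rpow_of_nonneg _ _ (by positivity)).symm
        _ = (cQ * Sprod) ^ (1/a) := by rw [hidprod]
        _ = cQ ^ (1/a) * Sprod ^ (1/a) := ENNReal.mul_rpow_of_nonneg _ _ (by positivity)
        _ ≤ cQ ^ (1/a) * ∫⁻ x₁, (S₂ x₁) ^ (1/a) ∂μ₁ := mul_le_mul_right hmink' _
        _ = ∫⁻ x₁, cQ ^ (1/a) * (S₂ x₁) ^ (1/a) ∂μ₁ :=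
            (lintegral_const_mul' _ _
              (ENNReal.rpow_ne_top_of_nonneg (by positivity) hcQnt)).symm
        _ = ∫⁻ x₁, cA ^ (1/a) * (T₂ x₁) ^ (1/a) ∂μ₁ := by
            refine lintegral_congr fun x₁ => ?_
            rw [← ENNReal.mul_rpow_of_nonneg _ _ (by positivity : (0:ℝ) ≤ 1/a),
              ← ENNReal.mul_rpow_of_nonneg _ _ (by positivity : (0:ℝ) ≤ 1/a),
              hid₂ x₁]
        _ = cA ^ (1/a) * Rp := by
            rw [hRp, lintegral_const_mul' _ _ hcAa_nt]
    have hTR : Tprod ^ (1/a) ≤ Rp := (ENNReal.mul_le_mul_iff_right hcAa_ne hcAa_nt).mp hchain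
    calc Tprod ^ (1/q) = (Tprod ^ (1/a)) ^ (1/p) := by
          rw [← ENNReal.rpow_mul]
          congr 1
          rw [hadef]
          field_simp
        _ ≤ Rp ^ (1/p) := ENNReal.rpow_le_rpow hTR (by positivity)
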